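/- For the building set B(P,n) on [n+1] (n ≥ 3) and t with 2 ≤ t ≤ n−1, let S_t = {1, 2, n+1} ∪ {3,...,t} (with S₂ = {1,2,n+1}). Then S_t ∈ B(P,n), and the restricted building set B(P,n)|_{S_t} is isomorphic, under the bijection of S_t with [t+1] sending 1↦1, 2↦2, i↦i for 3 ≤ i ≤ t, and n+1 ↦ t+1, to the building set B(P,t). -/
import Mathlib

/-- The building set `B(P,m)` on `[m+1]`. -/
def BP (m : ℕ) : Set (Finset ℕ) :=
  {S | ∃ i ∈ Finset.Icc 1 (m + 1), S = {i}} ∪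
  {S | ∃ T ⊆ Finset.Icc 3 (m + 1), S = {1, 2} ∪ T} ∪
  {S | ∃ T : Finset ℕ, T ⊆ Finset.Icc 3 m ∧ T.Nonempty ∧ S = {1} ∪ T} ∪
  {Finset.Icc 1 (m + 1)}

lemma mem_BP_iff (m : ℕ) (S : Finset ℕ) : S ∈ BP m ↔
    (∃ i, (1 ≤ i ∧ i ≤ m+1) ∧ S = {i}) ∨
    (∃ T, T ⊆ Finset.Icc 3 (m+1) ∧ S = {1,2} ∪ T) ∨
    (∃ T, T ⊆ Finset.Icc 3 m ∧ T.Nonempty ∧ S = {1} ∪ T) ∨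
    S = Finset.Icc 1 (m+1) := by
  simp only [BP, Set.mem_union, Set.mem_setOf_eq, Set.mem_singleton_iff, Finset.mem_Icc]
  constructor
  · rintro (((h | h) | h) | h)
    · exact Or.inl h
    · exact Or.inr (Or.inl h)
    · exact Or.inr (Or.inr (Or.inl h))
    · exact Or.inr (Or.inr (Or.inr h))
  · rintro (h | h | h | h)
    · exact Or.inl (Or.inl (Or.inl h))
    · exact Or.inl (Or.inl (Or.inr h))
    · exact Or.inl (Or.inr h)
    · exact Or.inr h

/-- For `2 ≤ t ≤ n-1`, the set `S_t = {1,2,n+1} ∪ {3,…,t}` belongs to `B(P,n)`, and the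
restricted building set `B(P,n)|_{S_t}` is carried onto `B(P,t)` by the bijection of
`S_t` with `[t+1]` fixing `1, 2` and `3,…,t` and sending `n+1 ↦ t+1`. -/
theorem BP_restriction_iso (n t : ℕ) (hn : 3 ≤ n) (ht : 2 ≤ t) (htn : t ≤ n - 1) :
    let St : Finset ℕ := {1, 2, n + 1} ∪ Finset.Icc 3 t
    let f : ℕ → ℕ := fun i => if i = n + 1 then t + 1 else i
    St ∈ BP n ∧ Set.InjOn f ↑St ∧
      (Finset.image f) '' {T | T ∈ BP n ∧ T ⊆ St} = BP t := by
  intro St f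
  have htn' : t + 1 ≤ n := by omega
  have hmemSt : ∀ x, x ∈ St ↔ (x = 1 ∨ x = 2 ∨ x = n + 1 ∨ (3 ≤ x ∧ x ≤ t)) := by
    intro x
    simp only [St, Finset.mem_union, Finset.mem_insert, Finset.mem_singleton, Finset.mem_Icc]
    tauto
  have hf_eq : ∀ x : ℕ, x ≠ n + 1 → f x = x := fun x hx => if_neg hx
  have hf_top : f (n + 1) = t + 1 := if_pos rfl
  -- images of sets not containing n+1 are fixed
  have himg_fix : ∀ A : Finset ℕ, (n + 1) ∉ A → A.image f = A := by
    intro A hA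
    apply Finset.ext
    intro y
    simp only [Finset.mem_image]
    constructor
    · rintro ⟨x, hx, rfl⟩
      rw [hf_eq x (fun h => hA (h ▸ hx))]; exact hx
    · intro hy; exact ⟨y, hy, hf_eq y (fun h => hA (h ▸ hy))⟩
  have h12 : ({1, 2} : Finset ℕ).image f = {1, 2} := by
    apply himg_fix; simp; omega
  -- Part 1
  have hStmem : St ∈ BP n := by
    rw [mem_BP_iff]
    refine Or.inr (Or.inl ⟨insert (n + 1) (Finset.Icc 3 t), ?_, ?_⟩)
    · intro x hx
      simp only [Finset.mem_insert, Finset.mem_Icc] at hx ⊢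
      omega
    · apply Finset.ext
      intro x
      rw [hmemSt]
      simp only [Finset.mem_union, Finset.mem_insert, Finset.mem_singleton, Finset.mem_Icc]
      tauto
  refine ⟨hStmem, ?_, ?_⟩
  -- Part 2: injectivity
  · intro a ha b hb hab
    rw [Finset.mem_coe, hmemSt] at ha hb
    by_cases h1 : a = n + 1 <;> by_cases h2 : b = n + 1
    · omega
    · rw [h1, hf_top, hf_eq b h2] at hab; omega
    · rw [h2, hf_top, hf_eq a h1] at hab; omega
    · rwa [hf_eq a h1, hf_eq b h2] at hab
  -- Part 3
  · -- helper for class-two sets in the reverse direction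
    have classTwo : ∀ T' : Finset ℕ, T' ⊆ Finset.Icc 3 (t + 1) →
        ∃ S, (S ∈ BP n ∧ S ⊆ St) ∧ S.image f = {1, 2} ∪ T' := by
      intro T' hT'
      by_cases hc : t + 1 ∈ T'
      · refine ⟨{1, 2} ∪ insert (n + 1) (T'.erase (t + 1)), ⟨?_, ?_⟩, ?_⟩
        · rw [mem_BP_iff]
          refine Or.inr (Or.inl ⟨insert (n + 1) (T'.erase (t + 1)), ?_, rfl⟩)
          intro x hx
          simp only [Finset.mem_insert, Finset.mem_erase] at hx
          rcases hx with rfl | ⟨hx1, hx2⟩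
          · simp only [Finset.mem_Icc]; omega
          · have := hT' hx2; simp only [Finset.mem_Icc] at this ⊢; omega
        · intro x hx
          simp only [Finset.mem_union, Finset.mem_insert, Finset.mem_singleton,
            Finset.mem_erase] at hx
          rw [hmemSt]
          rcases hx with (rfl | rfl) | (rfl | ⟨hx1, hx2⟩)
          · tauto
          · tauto
          · tauto
          · have := hT' hx2; simp only [Finset.mem_Icc] at this; omega
        · rw [Finset.image_union, h12, Finset.image_insert, hf_top,
            himg_fix _ (fun h => by
              have := hT' (Finset.mem_of_mem_erase h)
              simp only [Finset.mem_Icc] at this; omega),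
            Finset.insert_erase hc]
      · have hT'sub : ∀ x ∈ T', 3 ≤ x ∧ x ≤ t := by
          intro x hx
          have h1 := hT' hx
          simp only [Finset.mem_Icc] at h1
          have hxne : x ≠ t + 1 := fun h => hc (h ▸ hx)
          omega
        refine ⟨{1, 2} ∪ T', ⟨?_, ?_⟩, ?_⟩
        · rw [mem_BP_iff]
          refine Or.inr (Or.inl ⟨T', ?_, rfl⟩)
          intro x hx
          have := hT'sub x hx; simp only [Finset.mem_Icc]; omega
        · intro x hx
          simp only [Finset.mem_union, Finset.mem_insert, Finset.mem_singleton] at hx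
          rw [hmemSt]
          rcases hx with (rfl | rfl) | hx
          · tauto
          · tauto
          · have := hT'sub x hx; tauto
        · rw [Finset.image_union, h12, himg_fix _ (fun h => by
            have := hT'sub _ h; omega)]
    apply Set.ext
    intro X
    simp only [Set.mem_image, Set.mem_setOf_eq]
    constructor
    · rintro ⟨T, ⟨hTB, hTSt⟩, rfl⟩
      rw [mem_BP_iff] at hTB
      rcases hTB with ⟨i, hi, rfl⟩ | ⟨T, hT, rfl⟩ | ⟨T, hT, hTne, rfl⟩ | rfl
      · -- singleton
        rw [mem_BP_iff]
        refine Or.inl ⟨f i, ?_, by simp⟩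
        have hiSt : i ∈ St := hTSt (Finset.mem_singleton_self i)
        rw [hmemSt] at hiSt
        by_cases h : i = n + 1
        · rw [h, hf_top]; omega
        · rw [hf_eq i h]; omega
      · -- {1,2} ∪ T
        rw [mem_BP_iff]
        refine Or.inr (Or.inl ⟨T.image f, ?_, ?_⟩)
        · intro y hy
          simp only [Finset.mem_image] at hy
          obtain ⟨x, hx, rfl⟩ := hy
          have hx1 := hT hx
          have hx2 : x ∈ St := hTSt (Finset.mem_union_right _ hx)
          rw [hmemSt] at hx2
          simp only [Finset.mem_Icc] at hx1 ⊢
          by_cases h : x = n + 1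
          · rw [h, hf_top]; omega
          · rw [hf_eq x h]; omega
        · rw [Finset.image_union, h12]
      · -- {1} ∪ T
        rw [mem_BP_iff]
        have hfix : ∀ x ∈ ({1} ∪ T : Finset ℕ), x ≠ n + 1 := by
          intro x hx
          simp only [Finset.mem_union, Finset.mem_singleton] at hx
          rcases hx with rfl | hx
          · omega
          · have := hT hx; simp only [Finset.mem_Icc] at this; omega
        rw [himg_fix _ (fun h => hfix _ h rfl)]
        refine Or.inr (Or.inr (Or.inl ⟨T, ?_, hTne, rfl⟩))
        intro x hx
        have h1 := hT hx
        have h2 : x ∈ St := hTSt (Finset.mem_union_right _ hx)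
        rw [hmemSt] at h2
        simp only [Finset.mem_Icc] at h1 ⊢
        omega
      · -- full set: impossible
        exfalso
        have : t + 1 ∈ St := hTSt (by simp only [Finset.mem_Icc]; omega)
        rw [hmemSt] at this
        omega
    · intro hX
      rw [mem_BP_iff] at hX
      rcases hX with ⟨j, hj, rfl⟩ | ⟨T', hT', rfl⟩ | ⟨T', hT', hT'ne, rfl⟩ | rfl
      · -- singleton
        by_cases h : j = t + 1
        · refine ⟨{n + 1}, ⟨?_, ?_⟩, ?_⟩
          · rw [mem_BP_iff]; exact Or.inl ⟨n + 1, by omega, rfl⟩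
          · intro x hx
            simp only [Finset.mem_singleton] at hx
            rw [hmemSt]; tauto
          · rw [Finset.image_singleton, hf_top, h]
        · refine ⟨{j}, ⟨?_, ?_⟩, ?_⟩
          · rw [mem_BP_iff]; exact Or.inl ⟨j, by omega, rfl⟩
          · intro x hx
            rw [Finset.mem_singleton] at hx
            rw [hmemSt, hx]
            omega
          · rw [Finset.image_singleton, hf_eq j (by omega)]
      · exact classTwo T' hT'
      · -- {1} ∪ T'
        refine ⟨{1} ∪ T', ⟨?_, ?_⟩, ?_⟩
        · rw [mem_BP_iff]
          refine Or.inr (Or.inr (Or.inl ⟨T', ?_, hT'ne, rfl⟩))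
          intro x hx
          have := hT' hx; simp only [Finset.mem_Icc] at this ⊢; omega
        · intro x hx
          simp only [Finset.mem_union, Finset.mem_singleton] at hx
          rw [hmemSt]
          rcases hx with rfl | hx
          · tauto
          · have := hT' hx; simp only [Finset.mem_Icc] at this; omega
        · apply himg_fix
          simp only [Finset.mem_union, Finset.mem_singleton]
          push_neg
          constructor
          · omega
          · intro h
            have := hT' h; simp only [Finset.mem_Icc] at this; omega
      · -- full set Icc 1 (t+1)
        obtain ⟨S, hS, hSimg⟩ := classTwo (Finset.Icc 3 (t + 1)) le_rfl
        refine ⟨S, hS, ?_⟩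
        rw [hSimg]
        apply Finset.ext
        intro x
        simp only [Finset.mem_union, Finset.mem_insert, Finset.mem_singleton, Finset.mem_Icc]
        omega
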